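/- Let a < b be real numbers, let n be a positive integer, let h > 0, let z ∈ ℂ with z ≠ 0, and let v ∈ W. Then the following are equivalent: (A) there exists a unique u ∈ W with z·u − 𝒥_m u = v; (B) there exists a unique vector c ∈ ℂ^m with (z·I_m − A_m)·c = V_m v, where I_m is the m×m identity matrix. -/

import Mathlib

open MeasureTheory Set

noncomputable section

/-- The normalized sinc function on `ℝ`. -/
def rsinc (x : ℝ) : ℝ := if x = 0 then 1 else Real.sin (Real.pi * x) / (Real.pi * x)

/-- `δ_k = 1/2 + ∫_0^k sinc(t) dt`. -/
def deltaK (k : ℤ) : ℝ := 1 / 2 + ∫ t in (0:ℝ)..(k:ℝ), rsinc t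

/-- The single-exponential (SE) transformation. -/
def psiSE (a b u : ℝ) : ℝ := (b - a) / 2 * Real.tanh (u / 2) + (b + a) / 2

/-- Derivative of the SE transformation. -/
def psiSE' (a b u : ℝ) : ℝ := (b - a) / (4 * Real.cosh (u / 2) ^ 2)

/-- Inverse of the SE transformation. -/
def phiSE (a b x : ℝ) : ℝ := Real.log ((x - a) / (b - x))

/-- The double-exponential (DE) transformation. -/
def psiDE (a b u : ℝ) : ℝ :=
  (b - a) / 2 * Real.tanh (Real.pi / 2 * Real.sinh u) + (b + a) / 2

/-- Derivative of the DE transformation. -/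
def psiDE' (a b u : ℝ) : ℝ :=
  (b - a) * Real.pi / 4 * Real.cosh u / Real.cosh (Real.pi / 2 * Real.sinh u) ^ 2

/-- The inverse hyperbolic tangent (not available in Mathlib). -/
def artanh (x : ℝ) : ℝ := 1 / 2 * Real.log ((1 + x) / (1 - x))

/-- Inverse of the DE transformation. -/
def phiDE (a b x : ℝ) : ℝ :=
  Real.arsinh (2 / Real.pi * artanh ((2 * x - a - b) / (b - a)))

/-- The sinc basis term `sinc((φ(x) - kh)/h)`, interpreted as `0` at the endpoints
`x = a` and `x = b` (continuous extension). -/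
def sincTerm (a b : ℝ) (phi : ℝ → ℝ) (h : ℝ) (k : ℤ) (x : ℝ) : ℝ :=
  if x = a ∨ x = b then 0 else rsinc ((phi x - (k : ℝ) * h) / h)

/-- The basis functions `ω_i`, `i ∈ {-n, …, n}`. -/
def omegaF (a b : ℝ) (psi phi : ℝ → ℝ) (n : ℕ) (h : ℝ) (i : ℤ) (x : ℝ) : ℝ :=
  if i = -(n : ℤ) then
    (1 / ((b - psi (-(n : ℝ) * h)) / (b - a))) *
      ((b - x) / (b - a) -
        ∑ k ∈ Finset.Icc (-(n : ℤ) + 1) (n : ℤ),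
          (b - psi ((k : ℝ) * h)) / (b - a) * sincTerm a b phi h k x)
  else if i = (n : ℤ) then
    (1 / ((psi ((n : ℝ) * h) - a) / (b - a))) *
      ((x - a) / (b - a) -
        ∑ k ∈ Finset.Icc (-(n : ℤ)) ((n : ℤ) - 1),
          (psi ((k : ℝ) * h) - a) / (b - a) * sincTerm a b phi h k x)
  else sincTerm a b phi h i x

/-- The Sinc indefinite integration operator, as a pointwise formula:
`(𝒥_m g)(x) = Σ_i (h Σ_j δ_{i-j} g(ψ(jh)) ψ'(jh)) ω_i(x)`. -/
def JmF (a b : ℝ) (psi psi' phi : ℝ → ℝ) (n : ℕ) (h : ℝ) (g : ℝ → ℂ) (x : ℝ) : ℂ :=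
  ∑ i ∈ Finset.Icc (-(n : ℤ)) (n : ℤ),
    ((h : ℂ) * ∑ j ∈ Finset.Icc (-(n : ℤ)) (n : ℤ),
        (deltaK (i - j) : ℂ) * g (psi ((j : ℝ) * h)) * (psi' ((j : ℝ) * h) : ℂ)) *
      (omegaF a b psi phi n h i x : ℂ)

/-- The `m × m` matrix `A_m`, `(A_m)_{ij} = h δ_{i-j} ψ'(jh)`, indices shifted to
`Fin (2n+1)`. -/
def AmF (psi' : ℝ → ℝ) (n : ℕ) (h : ℝ) : Matrix (Fin (2*n+1)) (Fin (2*n+1)) ℂ :=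
  Matrix.of fun i j =>
    ((h * deltaK ((((i : ℕ) : ℤ) - (n : ℤ)) - (((j : ℕ) : ℤ) - (n : ℤ))) *
        psi' ((((((j : ℕ) : ℤ) - (n : ℤ)) : ℤ) : ℝ) * h) : ℝ) : ℂ)

/-- The strip `D_d = {ζ : |Im ζ| < d}`. -/
def strip (d : ℝ) : Set ℂ := {z : ℂ | |z.im| < d}

/-- Holomorphic extension of the SE transformation. -/
def psiSEC (a b : ℝ) (z : ℂ) : ℂ :=
  ((b - a) / 2 : ℂ) * Complex.tanh (z / 2) + ((b + a) / 2 : ℂ)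

/-- The image `ψ(D_d)` of the strip under the SE transformation. -/
def seDomain (a b d : ℝ) : Set ℂ := psiSEC a b '' strip d

end
open Set Filter Topology

section Aux
open Real

lemma continuous_rsinc : Continuous rsinc := by
  rw [continuous_iff_continuousAt]
  intro x
  rcases eq_or_ne x 0 with rfl | hx
  · rw [← continuousWithinAt_compl_self]
    have h1 : Tendsto (fun y : ℝ => Real.sin y / y) (𝓝[≠] 0) (𝓝 1) := by
      have := (hasDerivAt_iff_tendsto_slope).1 (Real.hasDerivAt_sin 0)
      rw [Real.cos_zero] at this
      refine this.congr' ?_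
      filter_upwards [self_mem_nhdsWithin] with y hy
      simp [slope, hy, div_eq_inv_mul]
    have h2 : Tendsto (fun y : ℝ => Real.pi * y) (𝓝[≠] 0) (𝓝[≠] 0) := by
      rw [tendsto_nhdsWithin_iff]
      constructor
      · simpa using ((continuous_mul_left Real.pi).tendsto (0:ℝ)).mono_left
          nhdsWithin_le_nhds
      · filter_upwards [self_mem_nhdsWithin] with y hy
        simp only [mem_compl_iff, mem_singleton_iff] at hy ⊢
        exact mul_ne_zero Real.pi_ne_zero hy
    have h3 := h1.comp h2
    have : rsinc 0 = 1 := by simp [rsinc]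
    rw [ContinuousWithinAt, this]
    refine h3.congr' ?_
    filter_upwards [self_mem_nhdsWithin] with y hy
    simp only [mem_compl_iff, mem_singleton_iff] at hy
    simp [rsinc, hy, Function.comp]
  · have : ∀ᶠ y in 𝓝 x, rsinc y = Real.sin (Real.pi * y) / (Real.pi * y) := by
      filter_upwards [isOpen_compl_singleton.mem_nhds (by simpa using hx)] with y hy
      simp only [mem_compl_iff, mem_singleton_iff] at hy
      simp [rsinc, hy]
    refine ContinuousAt.congr ?_ (Filter.EventuallyEq.symm this)
    exact (Real.continuous_sin.continuousAt.comp
      (continuous_const.mul continuous_id).continuousAt).div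
      (continuous_const.mul continuous_id).continuousAt
      (mul_ne_zero Real.pi_ne_zero hx)

lemma rsinc_intCast (m : ℤ) : rsinc (m : ℝ) = if m = 0 then 1 else 0 := by
  rcases eq_or_ne m 0 with rfl | hm
  · simp [rsinc]
  · have hm' : (m : ℝ) ≠ 0 := Int.cast_ne_zero.2 hm
    simp only [rsinc, hm', if_neg hm, if_neg hm']
    rw [mul_comm, Real.sin_int_mul_pi]
    simp

lemma tendsto_rsinc_atBot : Tendsto rsinc atBot (𝓝 0) := by
  have hb : ∀ᶠ y : ℝ in atBot, ‖rsinc y‖ ≤ (Real.pi * |y|)⁻¹ := by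
    filter_upwards [eventually_lt_atBot (0:ℝ)] with y hy
    have hy' : y ≠ 0 := hy.ne
    have hpy : Real.pi * |y| > 0 := mul_pos Real.pi_pos (abs_pos.2 hy')
    simp only [rsinc, if_neg hy', Real.norm_eq_abs, abs_div, abs_mul, abs_of_pos Real.pi_pos]
    rw [div_le_iff₀ hpy, inv_mul_cancel₀ hpy.ne']
    exact Real.abs_sin_le_one _
  have hz : Tendsto (fun y : ℝ => (Real.pi * |y|)⁻¹) atBot (𝓝 0) := by
    apply Tendsto.inv_tendsto_atTop
    exact (tendsto_const_mul_atTop_of_pos Real.pi_pos).2 tendsto_abs_atBot_atTop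
  exact squeeze_zero_norm' hb hz

lemma tendsto_rsinc_atTop : Tendsto rsinc atTop (𝓝 0) := by
  have hb : ∀ᶠ y : ℝ in atTop, ‖rsinc y‖ ≤ (Real.pi * |y|)⁻¹ := by
    filter_upwards [eventually_gt_atTop (0:ℝ)] with y hy
    have hy' : y ≠ 0 := hy.ne'
    have hpy : Real.pi * |y| > 0 := mul_pos Real.pi_pos (abs_pos.2 hy')
    simp only [rsinc, if_neg hy', Real.norm_eq_abs, abs_div, abs_mul, abs_of_pos Real.pi_pos]
    rw [div_le_iff₀ hpy, inv_mul_cancel₀ hpy.ne']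
    exact Real.abs_sin_le_one _
  have hz : Tendsto (fun y : ℝ => (Real.pi * |y|)⁻¹) atTop (𝓝 0) := by
    apply Tendsto.inv_tendsto_atTop
    exact (tendsto_const_mul_atTop_of_pos Real.pi_pos).2 (tendsto_abs_atTop_atTop)
  exact squeeze_zero_norm' hb hz

lemma tanh_mem_Ioo (x : ℝ) : Real.tanh x ∈ Set.Ioo (-1 : ℝ) 1 := by
  rw [Real.tanh_eq_sinh_div_cosh]
  have hc := Real.cosh_pos x
  constructor
  · rw [lt_div_iff₀ hc]
    have := Real.sinh_lt_cosh (-x)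
    rw [Real.sinh_neg, Real.cosh_neg] at this
    linarith
  · rw [div_lt_one hc]
    exact Real.sinh_lt_cosh x

lemma psiSE_mem_Ioo {a b : ℝ} (hab : a < b) (u : ℝ) : psiSE a b u ∈ Set.Ioo a b := by
  obtain ⟨h1, h2⟩ := tanh_mem_Ioo (u / 2)
  have hba : (0:ℝ) < b - a := by linarith
  constructor <;> · simp only [psiSE]; nlinarith

lemma psiSE_ratio {a b : ℝ} (hab : a < b) (u : ℝ) :
    (psiSE a b u - a) / (b - psiSE a b u) = Real.exp u := by
  have hc := Real.cosh_pos (u / 2)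
  have hba : (0:ℝ) < b - a := by linarith
  have e1 : psiSE a b u - a = (b - a) * Real.exp (u/2) / (2 * Real.cosh (u/2)) := by
    simp only [psiSE, Real.tanh_eq_sinh_div_cosh]
    field_simp
    rw [← Real.cosh_add_sinh (u/2)]; ring
  have e2 : b - psiSE a b u = (b - a) * Real.exp (-(u/2)) / (2 * Real.cosh (u/2)) := by
    have hsub := Real.cosh_sub_sinh (u/2)
    simp only [psiSE, Real.tanh_eq_sinh_div_cosh]
    field_simp
    rw [show (-(u/2)) = -u/2 by ring] at hsub
    rw [show -u/2 = -(u/2) by ring] at hsub; rw [← hsub]; ring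
  rw [e1, e2, div_div_div_cancel_right₀, mul_div_mul_left _ _ hba.ne', ← Real.exp_sub]
  · norm_num
  · positivity

lemma phiSE_psiSE {a b : ℝ} (hab : a < b) (u : ℝ) :
    phiSE a b (psiSE a b u) = u := by
  rw [phiSE, psiSE_ratio hab, Real.log_exp]

lemma sincTerm_node {a b h : ℝ} (hab : a < b) (hh : 0 < h) (k j : ℤ) :
    sincTerm a b (phiSE a b) h k (psiSE a b ((j : ℝ) * h)) = if k = j then 1 else 0 := by
  obtain ⟨h1, h2⟩ := psiSE_mem_Ioo hab ((j : ℝ) * h)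
  have hne : ¬(psiSE a b ((j:ℝ)*h) = a ∨ psiSE a b ((j:ℝ)*h) = b) := by
    push_neg; exact ⟨ne_of_gt h1, ne_of_lt h2⟩
  rw [sincTerm, if_neg hne, phiSE_psiSE hab]
  have he : ((j:ℝ) * h - (k:ℝ) * h) / h = ((j - k : ℤ) : ℝ) := by
    push_cast
    field_simp
  rw [he, rsinc_intCast]
  have : j - k = 0 ↔ k = j := by omega
  simp only [this]

lemma sincTerm_tendsto_a {a b h : ℝ} (hab : a < b) (hh : 0 < h) (k : ℤ) :
    Tendsto (sincTerm a b (phiSE a b) h k) (𝓝[Set.Ioo a b] a) (𝓝 0) := by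
  have T1 : Tendsto (fun y => (y - a) / (b - y)) (𝓝[Set.Ioo a b] a) (𝓝[>] (0:ℝ)) := by
    rw [tendsto_nhdsWithin_iff]
    constructor
    · have hc : ContinuousAt (fun y : ℝ => (y - a)/(b - y)) a :=
        (continuousAt_id.sub continuousAt_const).div
          (continuousAt_const.sub continuousAt_id)
          (sub_ne_zero_of_ne hab.ne')
      have h0 : (a - a)/(b - a) = 0 := by simp
      simpa [h0] using hc.tendsto.mono_left nhdsWithin_le_nhds
    · filter_upwards [self_mem_nhdsWithin] with y hy
      simpa using div_pos (show (0:ℝ) < y - a by linarith [hy.1])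
        (show (0:ℝ) < b - y by linarith [hy.2])
  have T2 : Tendsto (fun y => Real.log ((y - a) / (b - y))) (𝓝[Set.Ioo a b] a) atBot :=
    Real.tendsto_log_nhdsGT_zero.comp T1
  have T3 : Tendsto (fun t : ℝ => (t - (k:ℝ)*h)/h) atBot atBot := by
    simp only [sub_eq_add_neg]
    exact Tendsto.atBot_div_const hh (tendsto_atBot_add_const_right _ _ tendsto_id)
  have T4 := tendsto_rsinc_atBot.comp (T3.comp T2)
  refine T4.congr' ?_
  filter_upwards [self_mem_nhdsWithin] with y hy
  have : ¬(y = a ∨ y = b) := by push_neg; exact ⟨ne_of_gt hy.1, ne_of_lt hy.2⟩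
  simp [sincTerm, this, phiSE, Function.comp]

lemma sincTerm_tendsto_b {a b h : ℝ} (hab : a < b) (hh : 0 < h) (k : ℤ) :
    Tendsto (sincTerm a b (phiSE a b) h k) (𝓝[Set.Ioo a b] b) (𝓝 0) := by
  have T0 : Tendsto (fun y => (b - y) / (y - a)) (𝓝[Set.Ioo a b] b) (𝓝[>] (0:ℝ)) := by
    rw [tendsto_nhdsWithin_iff]
    constructor
    · have hc : ContinuousAt (fun y : ℝ => (b - y)/(y - a)) b :=
        (continuousAt_const.sub continuousAt_id).div
          (continuousAt_id.sub continuousAt_const)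
          (sub_ne_zero_of_ne hab.ne')
      have h0 : (b - b)/(b - a) = 0 := by simp
      simpa [h0] using hc.tendsto.mono_left nhdsWithin_le_nhds
    · filter_upwards [self_mem_nhdsWithin] with y hy
      simpa using div_pos (show (0:ℝ) < b - y by linarith [hy.2])
        (show (0:ℝ) < y - a by linarith [hy.1])
  have T1 : Tendsto (fun y => (y - a) / (b - y)) (𝓝[Set.Ioo a b] b) atTop := by
    refine (tendsto_inv_nhdsGT_zero.comp T0).congr fun y => ?_
    simp [Function.comp, inv_div]
  have T2 : Tendsto (fun y => Real.log ((y - a) / (b - y))) (𝓝[Set.Ioo a b] b) atTop :=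
    Real.tendsto_log_atTop.comp T1
  have T3 : Tendsto (fun t : ℝ => (t - (k:ℝ)*h)/h) atTop atTop := by
    simp only [sub_eq_add_neg]
    exact Tendsto.atTop_div_const hh (tendsto_atTop_add_const_right _ _ tendsto_id)
  have T4 := tendsto_rsinc_atTop.comp (T3.comp T2)
  refine T4.congr' ?_
  filter_upwards [self_mem_nhdsWithin] with y hy
  have : ¬(y = a ∨ y = b) := by push_neg; exact ⟨ne_of_gt hy.1, ne_of_lt hy.2⟩
  simp [sincTerm, this, phiSE, Function.comp]

lemma sincTerm_continuousOn {a b h : ℝ} (hab : a < b) (hh : 0 < h) (k : ℤ) :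
    ContinuousOn (sincTerm a b (phiSE a b) h k) (Set.Icc a b) := by
  intro x hx
  rcases eq_or_ne x a with hxa | hxa
  · subst hxa
    have hfa : sincTerm x b (phiSE x b) h k x = 0 := by simp [sincTerm]
    rw [ContinuousWithinAt, hfa,
      show Set.Icc x b = insert x (Set.Ioc x b) from (Set.Ioc_insert_left hab.le).symm,
      nhdsWithin_insert, tendsto_sup]
    refine ⟨by simpa [hfa] using tendsto_pure_nhds (sincTerm x b (phiSE x b) h k) x, ?_⟩
    rw [nhdsWithin_Ioc_eq_nhdsGT hab, ← nhdsWithin_Ioo_eq_nhdsGT hab]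
    exact sincTerm_tendsto_a hab hh k
  rcases eq_or_ne x b with hxb | hxb
  · subst hxb
    have hfb : sincTerm a x (phiSE a x) h k x = 0 := by simp [sincTerm]
    rw [ContinuousWithinAt, hfb,
      show Set.Icc a x = insert x (Set.Ico a x) from (Set.Ico_insert_right hab.le).symm,
      nhdsWithin_insert, tendsto_sup]
    refine ⟨by simpa [hfb] using tendsto_pure_nhds (sincTerm a x (phiSE a x) h k) x, ?_⟩
    rw [nhdsWithin_Ico_eq_nhdsLT hab, ← nhdsWithin_Ioo_eq_nhdsLT hab]
    exact sincTerm_tendsto_b hab hh k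
  · have hmem : x ∈ Set.Ioo a b := ⟨lt_of_le_of_ne hx.1 (Ne.symm hxa), lt_of_le_of_ne hx.2 hxb⟩
    apply ContinuousWithinAt.congr_of_eventuallyEq
      (f := fun y => rsinc ((phiSE a b y - (k:ℝ) * h) / h))
    · apply ContinuousAt.continuousWithinAt
      apply continuous_rsinc.continuousAt.comp
      apply ContinuousAt.div_const
      apply ContinuousAt.sub _ continuousAt_const
      apply (Real.continuousAt_log ?_).comp
        ((continuousAt_id.sub continuousAt_const).div
          (continuousAt_const.sub continuousAt_id) ?_)
      · exact ne_of_gt (div_pos (show (0:ℝ) < x - a by linarith [hmem.1])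
          (show (0:ℝ) < b - x by linarith [hmem.2]))
      · exact sub_ne_zero_of_ne (ne_of_gt hmem.2)
    · filter_upwards [nhdsWithin_le_nhds (Ioo_mem_nhds hmem.1 hmem.2)] with y hy
      have : ¬(y = a ∨ y = b) := by push_neg; exact ⟨ne_of_gt hy.1, ne_of_lt hy.2⟩
      simp [sincTerm, this]
    · have : ¬(x = a ∨ x = b) := by push_neg; exact ⟨hxa, hxb⟩
      simp [sincTerm, this]

def toZi (n : ℕ) (j : Fin (2*n+1)) : ℤ := (j : ℤ) - n

def toFini (n : ℕ) (i : ℤ) : Fin (2*n+1) :=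
  ⟨(i + n).toNat % (2*n+1), Nat.mod_lt _ (Nat.succ_pos _)⟩

lemma toFini_toZi (n : ℕ) (j : Fin (2*n+1)) : toFini n (toZi n j) = j := by
  apply Fin.ext
  simp only [toFini, toZi]
  rw [sub_add_cancel, Int.toNat_natCast, Nat.mod_eq_of_lt j.isLt]

lemma toZi_toFini (n : ℕ) {i : ℤ} (hi : i ∈ Finset.Icc (-(n:ℤ)) (n:ℤ)) :
    toZi n (toFini n i) = i := by
  simp only [Finset.mem_Icc] at hi
  simp only [toZi, toFini]
  rw [Nat.mod_eq_of_lt (by omega), Int.toNat_of_nonneg (by omega)]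
  ring

lemma toZi_mem (n : ℕ) (j : Fin (2*n+1)) : toZi n j ∈ Finset.Icc (-(n:ℤ)) (n:ℤ) := by
  have := j.isLt
  simp only [toZi, Finset.mem_Icc]
  omega

lemma sum_toZi (n : ℕ) (f : ℤ → ℂ) :
    ∑ j : Fin (2*n+1), f (toZi n j) = ∑ i ∈ Finset.Icc (-(n:ℤ)) (n:ℤ), f i :=
  Finset.sum_nbij' (toZi n) (toFini n) (fun j _ => toZi_mem n j)
    (fun i hi => Finset.mem_univ _) (fun j _ => toFini_toZi n j)
    (fun i hi => toZi_toFini n hi) (fun j _ => rfl)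

lemma omegaF_continuousOn {a b h : ℝ} (hab : a < b) (hh : 0 < h) (n : ℕ) (i : ℤ) :
    ContinuousOn (omegaF a b (psiSE a b) (phiSE a b) n h i) (Set.Icc a b) := by
  unfold omegaF
  have hsum : ∀ (s : Finset ℤ) (c : ℤ → ℝ),
      ContinuousOn (fun x => ∑ k ∈ s, c k * sincTerm a b (phiSE a b) h k x) (Set.Icc a b) := by
    intro s c
    exact continuousOn_finset_sum s fun k _ =>
      continuousOn_const.mul (sincTerm_continuousOn hab hh k)
  split_ifs
  · exact continuousOn_const.mul
      (((continuousOn_const.sub continuousOn_id).div_const _).sub (hsum _ _))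
  · exact continuousOn_const.mul
      (((continuousOn_id.sub continuousOn_const).div_const _).sub (hsum _ _))
  · exact sincTerm_continuousOn hab hh i

lemma omegaF_neg_n {a b : ℝ} (psi phi : ℝ → ℝ) (n : ℕ) (h : ℝ) (x : ℝ) :
    omegaF a b psi phi n h (-(n:ℤ)) x =
      (1 / ((b - psi (-(n : ℝ) * h)) / (b - a))) *
      ((b - x) / (b - a) -
        ∑ k ∈ Finset.Icc (-(n : ℤ) + 1) (n : ℤ),
          (b - psi ((k : ℝ) * h)) / (b - a) * sincTerm a b phi h k x) := by
  simp [omegaF]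

lemma omegaF_pos_n {a b : ℝ} (psi phi : ℝ → ℝ) {n : ℕ} (hn : 1 ≤ n) (h : ℝ) (x : ℝ) :
    omegaF a b psi phi n h ((n:ℤ)) x =
      (1 / ((psi ((n : ℝ) * h) - a) / (b - a))) *
      ((x - a) / (b - a) -
        ∑ k ∈ Finset.Icc (-(n : ℤ)) ((n : ℤ) - 1),
          (psi ((k : ℝ) * h) - a) / (b - a) * sincTerm a b phi h k x) := by
  simp only [omegaF]
  rw [if_neg (show ¬((n:ℤ) = -(n:ℤ)) by omega)]
  simp

lemma omegaF_mid {a b : ℝ} (psi phi : ℝ → ℝ) {n : ℕ} {i : ℤ} (h1 : i ≠ -(n:ℤ))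
    (h2 : i ≠ (n:ℤ)) (h : ℝ) (x : ℝ) :
    omegaF a b psi phi n h i x = sincTerm a b phi h i x := by
  simp only [omegaF]
  rw [if_neg h1, if_neg h2]

lemma omegaF_node {a b h : ℝ} (hab : a < b) (hh : 0 < h) {n : ℕ} (hn : 1 ≤ n)
    {i j : ℤ} (hi : i ∈ Finset.Icc (-(n:ℤ)) (n:ℤ)) (hj : j ∈ Finset.Icc (-(n:ℤ)) (n:ℤ)) :
    omegaF a b (psiSE a b) (phiSE a b) n h i (psiSE a b ((j:ℝ) * h)) =
      if i = j then 1 else 0 := by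
  simp only [Finset.mem_Icc] at hi hj
  have hba : (0:ℝ) < b - a := by linarith
  have hbP : ∀ u : ℝ, 0 < b - psiSE a b u := fun u => sub_pos.2 (psiSE_mem_Ioo hab u).2
  have haP : ∀ u : ℝ, 0 < psiSE a b u - a := fun u => sub_pos.2 (psiSE_mem_Ioo hab u).1
  have hSzero : ∀ (c : ℤ → ℝ) (s : Finset ℤ), j ∉ s →
      (∑ k ∈ s, c k * sincTerm a b (phiSE a b) h k (psiSE a b ((j:ℝ) * h))) = 0 := by
    intro c s hjs
    apply Finset.sum_eq_zero
    intro k hk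
    rw [sincTerm_node hab hh, if_neg (by rintro rfl; exact hjs hk), mul_zero]
  have hSpick : ∀ (c : ℤ → ℝ) (s : Finset ℤ), j ∈ s →
      (∑ k ∈ s, c k * sincTerm a b (phiSE a b) h k (psiSE a b ((j:ℝ) * h))) = c j := by
    intro c s hjs
    rw [Finset.sum_congr rfl fun k _ => by
      rw [sincTerm_node hab hh, mul_ite, mul_one, mul_zero]]
    rw [Finset.sum_ite_eq' s j c, if_pos hjs]
  rcases eq_or_ne i (-(n:ℤ)) with rfl | h1
  · rw [omegaF_neg_n]
    rcases eq_or_ne j (-(n:ℤ)) with rfl | hjne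
    · rw [if_pos rfl, hSzero _ _ (by simp only [Finset.mem_Icc]; omega), sub_zero,
        show -(n:ℝ) * h = ((-(n:ℤ) : ℤ) : ℝ) * h by push_cast; ring, one_div,
        inv_mul_cancel₀ (ne_of_gt (div_pos (hbP _) hba))]
    · rw [if_neg fun hc => hjne hc.symm,
        hSpick _ _ (by simp only [Finset.mem_Icc]; omega), sub_self, mul_zero]
  · rcases eq_or_ne i (n:ℤ) with rfl | h2
    · rw [omegaF_pos_n _ _ hn]
      rcases eq_or_ne j (n:ℤ) with rfl | hjne
      · rw [if_pos rfl, hSzero _ _ (by simp only [Finset.mem_Icc]; omega), sub_zero,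
          show (n:ℝ) * h = (((n:ℤ) : ℤ) : ℝ) * h by push_cast; ring, one_div,
          inv_mul_cancel₀ (ne_of_gt (div_pos (haP _) hba))]
      · rw [if_neg fun hc => hjne hc.symm,
          hSpick _ _ (by simp only [Finset.mem_Icc]; omega), sub_self, mul_zero]
    · rw [omegaF_mid _ _ h1 h2]
      exact sincTerm_node hab hh i j

noncomputable def CoefI (a b h : ℝ) (n : ℕ) (w : ℤ → ℂ) (i : ℤ) : ℂ :=
  ∑ j ∈ Finset.Icc (-(n:ℤ)) (n:ℤ),
    ((h * deltaK (i - j) * psiSE' a b ((j:ℝ) * h) : ℝ) : ℂ) * w j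

lemma CoefI_congr {a b h : ℝ} {n : ℕ} {w w' : ℤ → ℂ}
    (hw : ∀ j ∈ Finset.Icc (-(n:ℤ)) (n:ℤ), w j = w' j) (i : ℤ) :
    CoefI a b h n w i = CoefI a b h n w' i :=
  Finset.sum_congr rfl fun j hj => by rw [hw j hj]

lemma JmF_eq (a b h : ℝ) (n : ℕ) (g : ℝ → ℂ) (x : ℝ) :
    JmF a b (psiSE a b) (psiSE' a b) (phiSE a b) n h g x =
      ∑ i ∈ Finset.Icc (-(n:ℤ)) (n:ℤ),
        CoefI a b h n (fun j => g (psiSE a b ((j:ℝ) * h))) i *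
          ((omegaF a b (psiSE a b) (phiSE a b) n h i x : ℝ) : ℂ) := by
  unfold JmF CoefI
  refine Finset.sum_congr rfl fun i _ => ?_
  congr 1
  rw [Finset.mul_sum]
  refine Finset.sum_congr rfl fun j _ => ?_
  push_cast
  ring

lemma JmF_node {a b h : ℝ} (hab : a < b) (hh : 0 < h) {n : ℕ} (hn : 1 ≤ n)
    (g : ℝ → ℂ) {j : ℤ} (hj : j ∈ Finset.Icc (-(n:ℤ)) (n:ℤ)) :
    JmF a b (psiSE a b) (psiSE' a b) (phiSE a b) n h g (psiSE a b ((j:ℝ) * h)) =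
      CoefI a b h n (fun k => g (psiSE a b ((k:ℝ) * h))) j := by
  rw [JmF_eq, Finset.sum_congr rfl (fun i hi => by rw [omegaF_node hab hh hn hi hj])]
  simp only [apply_ite (fun r : ℝ => (r : ℂ)), Complex.ofReal_one, Complex.ofReal_zero,
    mul_ite, mul_one, mul_zero]
  rw [Finset.sum_ite_eq' _ j _, if_pos hj]

lemma mulVec_eq (a b h : ℝ) (z : ℂ) (n : ℕ) (c : Fin (2*n+1) → ℂ) (jf : Fin (2*n+1)) :
    ((z • (1 : Matrix (Fin (2*n+1)) (Fin (2*n+1)) ℂ) - AmF (psiSE' a b) n h).mulVec c) jf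
      = z * c jf - CoefI a b h n (fun i => c (toFini n i)) (toZi n jf) := by
  rw [Matrix.sub_mulVec, Matrix.smul_mulVec, Matrix.one_mulVec]
  simp only [Pi.sub_apply, Pi.smul_apply, smul_eq_mul]
  congr 1
  have step : (AmF (psiSE' a b) n h).mulVec c jf =
      ∑ j' : Fin (2*n+1), (fun i : ℤ =>
        ((h * deltaK (toZi n jf - i) * psiSE' a b ((i:ℝ) * h) : ℝ) : ℂ) * c (toFini n i))
          (toZi n j') := by
    simp only [Matrix.mulVec, dotProduct, AmF, Matrix.of_apply, toZi]
    refine Finset.sum_congr rfl fun j' _ => ?_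
    rw [show toFini n ((j' : ℤ) - (n:ℤ)) = j' from toFini_toZi n j']
  rw [step, CoefI]
  exact sum_toZi n (fun i => ((h * deltaK (toZi n jf - i) * psiSE' a b ((i:ℝ) * h) : ℝ) : ℂ) * c (toFini n i))

/-- equivalence between unique solvability of
`z·u − 𝒥_m u = v` in `W = C([a,b],ℂ)` and unique solvability of the linear
system `(z·I_m − A_m) c = V_m v` in `ℂ^m`, for the SE-Sinc operators. -/
theorem stmt_11 (a b : ℝ) (hab : a < b) (n : ℕ) (hn : 1 ≤ n) (h : ℝ) (hh : 0 < h)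
    (z : ℂ) (hz : z ≠ 0) (v : C(Set.Icc a b, ℂ)) :
    (∃! u : C(Set.Icc a b, ℂ), ∀ x : Set.Icc a b,
        z * u x - JmF a b (psiSE a b) (psiSE' a b) (phiSE a b) n h
          (Set.IccExtend hab.le (⇑u)) (x : ℝ) = v x)
    ↔
    (∃! c : Fin (2*n+1) → ℂ,
        (z • (1 : Matrix (Fin (2*n+1)) (Fin (2*n+1)) ℂ) - AmF (psiSE' a b) n h).mulVec c
          = fun j : Fin (2*n+1) => Set.IccExtend hab.le (⇑v)
              (psiSE a b ((((((j : ℕ) : ℤ) - (n : ℤ)) : ℤ) : ℝ) * h))) := by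
  have hmemP : ∀ j : ℤ, psiSE a b ((j:ℝ) * h) ∈ Set.Icc a b :=
    fun j => Set.Ioo_subset_Icc_self (psiSE_mem_Ioo hab _)
  have hsum_node : ∀ (d : ℤ → ℂ) (j : ℤ), j ∈ Finset.Icc (-(n:ℤ)) (n:ℤ) →
      (∑ i ∈ Finset.Icc (-(n:ℤ)) (n:ℤ), d i *
        ((omegaF a b (psiSE a b) (phiSE a b) n h i (psiSE a b ((j:ℝ) * h)) : ℝ) : ℂ)) = d j := by
    intro d j hj
    rw [Finset.sum_congr rfl (fun i hi => by rw [omegaF_node hab hh hn hi hj])]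
    simp only [apply_ite (fun r : ℝ => (r : ℂ)), Complex.ofReal_one, Complex.ofReal_zero,
      mul_ite, mul_one, mul_zero]
    rw [Finset.sum_ite_eq' _ j _, if_pos hj]
  -- sampling: any solution of the operator equation yields a solution of the linear system
  have hsamp : ∀ u : C(Set.Icc a b, ℂ),
      (∀ x : Set.Icc a b, z * u x - JmF a b (psiSE a b) (psiSE' a b) (phiSE a b) n h
          (Set.IccExtend hab.le (⇑u)) (x : ℝ) = v x) →
      ((z • (1 : Matrix (Fin (2*n+1)) (Fin (2*n+1)) ℂ) - AmF (psiSE' a b) n h).mulVec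
          (fun j : Fin (2*n+1) => u ⟨psiSE a b ((((((j : ℕ) : ℤ) - (n : ℤ)) : ℤ) : ℝ) * h),
            hmemP _⟩)
        = fun j : Fin (2*n+1) => Set.IccExtend hab.le (⇑v)
            (psiSE a b ((((((j : ℕ) : ℤ) - (n : ℤ)) : ℤ) : ℝ) * h))) := by
    intro u hu
    funext jf
    rw [mulVec_eq]
    have hCc : CoefI a b h n
        (fun i => u ⟨psiSE a b ((((((toFini n i : ℕ) : ℤ) - (n : ℤ)) : ℤ) : ℝ) * h), hmemP _⟩)
          (toZi n jf)
        = CoefI a b h n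
            (fun i => Set.IccExtend hab.le (⇑u) (psiSE a b ((i:ℝ) * h))) (toZi n jf) := by
      apply CoefI_congr
      intro i hi
      have harg : psiSE a b ((((((toFini n i : ℕ) : ℤ) - (n : ℤ)) : ℤ) : ℝ) * h)
          = psiSE a b ((i:ℝ) * h) := by
        rw [show ((toFini n i : ℕ) : ℤ) - (n : ℤ) = i from toZi_toFini n hi]
      rw [Set.IccExtend_of_mem hab.le _ (hmemP i)]
      exact congrArg u (Subtype.ext harg)
    rw [hCc, ← JmF_node hab hh hn (Set.IccExtend hab.le (⇑u)) (toZi_mem n jf),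
      Set.IccExtend_of_mem hab.le (⇑v) (hmemP _)]
    simp only [toZi]
    exact hu ⟨psiSE a b ((((((jf : ℕ) : ℤ) - (n : ℤ)) : ℤ) : ℝ) * h), hmemP _⟩
  -- construction: a solution of the linear system yields a solution of the operator equation
  have key : ∀ c : Fin (2*n+1) → ℂ,
      ((z • (1 : Matrix (Fin (2*n+1)) (Fin (2*n+1)) ℂ) - AmF (psiSE' a b) n h).mulVec c
        = fun j : Fin (2*n+1) => Set.IccExtend hab.le (⇑v)
            (psiSE a b ((((((j : ℕ) : ℤ) - (n : ℤ)) : ℤ) : ℝ) * h))) →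
      ∃ u : C(Set.Icc a b, ℂ),
        (∀ x : Set.Icc a b, z * u x - JmF a b (psiSE a b) (psiSE' a b) (phiSE a b) n h
            (Set.IccExtend hab.le (⇑u)) (x : ℝ) = v x) ∧
        (∀ j ∈ Finset.Icc (-(n:ℤ)) (n:ℤ),
            u ⟨psiSE a b ((j:ℝ) * h), hmemP j⟩ = c (toFini n j)) := by
    intro c hc
    set d : ℤ → ℂ := CoefI a b h n (fun i => c (toFini n i)) with hd
    set U : ℝ → ℂ := fun x => z⁻¹ * (Set.IccExtend hab.le (⇑v) x +
      ∑ i ∈ Finset.Icc (-(n:ℤ)) (n:ℤ), d i *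
        ((omegaF a b (psiSE a b) (phiSE a b) n h i x : ℝ) : ℂ)) with hUdef
    have hUcont : ContinuousOn U (Set.Icc a b) := by
      rw [hUdef]
      apply ContinuousOn.mul continuousOn_const
      apply ContinuousOn.add
      · exact (Continuous.Icc_extend' v.continuous).continuousOn
      · exact continuousOn_finset_sum _ fun i _ => continuousOn_const.mul
          (Complex.continuous_ofReal.comp_continuousOn (omegaF_continuousOn hab hh n i))
    have hUP : ∀ j ∈ Finset.Icc (-(n:ℤ)) (n:ℤ),
        U (psiSE a b ((j:ℝ) * h)) = c (toFini n j) := by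
      intro j hj
      have hmv := congrFun hc (toFini n j)
      rw [mulVec_eq, toZi_toFini n hj,
        show ((toFini n j : ℕ) : ℤ) - (n : ℤ) = j from toZi_toFini n hj] at hmv
      have hdj : z * c (toFini n j) - d j
          = Set.IccExtend hab.le (⇑v) (psiSE a b ((j:ℝ) * h)) := hmv
      rw [hUdef]
      show z⁻¹ * (Set.IccExtend hab.le (⇑v) (psiSE a b ((j:ℝ) * h)) +
        ∑ i ∈ Finset.Icc (-(n:ℤ)) (n:ℤ), d i *
          ((omegaF a b (psiSE a b) (phiSE a b) n h i (psiSE a b ((j:ℝ) * h)) : ℝ) : ℂ))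
        = c (toFini n j)
      rw [hsum_node d j hj, ← hdj, sub_add_cancel, ← mul_assoc, inv_mul_cancel₀ hz, one_mul]
    refine ⟨⟨(Set.Icc a b).restrict U, hUcont.restrict⟩, ?_, ?_⟩
    · set u : C(Set.Icc a b, ℂ) := ⟨(Set.Icc a b).restrict U, hUcont.restrict⟩ with hu
      intro x
      have hucoe : ∀ y (hy : y ∈ Set.Icc a b), Set.IccExtend hab.le (⇑u) y = U y := by
        intro y hy
        rw [Set.IccExtend_of_mem hab.le _ hy]
        rfl
      have hcoefS : ∀ i : ℤ, CoefI a b h n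
          (fun j => Set.IccExtend hab.le (⇑u) (psiSE a b ((j:ℝ) * h))) i = d i := by
        intro i
        rw [hd]
        refine CoefI_congr (fun j hj => ?_) i
        rw [hucoe _ (hmemP j), hUP j hj]
      have hsums : ∑ i ∈ Finset.Icc (-(n:ℤ)) (n:ℤ), CoefI a b h n
            (fun j => Set.IccExtend hab.le (⇑u) (psiSE a b ((j:ℝ) * h))) i *
            ((omegaF a b (psiSE a b) (phiSE a b) n h i (x:ℝ) : ℝ) : ℂ)
          = ∑ i ∈ Finset.Icc (-(n:ℤ)) (n:ℤ), d i *
            ((omegaF a b (psiSE a b) (phiSE a b) n h i (x:ℝ) : ℝ) : ℂ) :=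
        Finset.sum_congr rfl fun i _ => by rw [hcoefS i]
      rw [JmF_eq, hsums]
      have hux : (u x : ℂ) = U (x : ℝ) := rfl
      have hzU : z * U (x : ℝ) = Set.IccExtend hab.le (⇑v) (x : ℝ) +
          ∑ i ∈ Finset.Icc (-(n:ℤ)) (n:ℤ), d i *
            ((omegaF a b (psiSE a b) (phiSE a b) n h i (x:ℝ) : ℝ) : ℂ) := by
        rw [hUdef]
        show z * (z⁻¹ * _) = _
        rw [← mul_assoc, mul_inv_cancel₀ hz, one_mul]
      rw [hux, hzU, add_sub_cancel_right]
      exact Set.IccExtend_val hab.le (⇑v) x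
    · intro j hj
      exact hUP j hj
  constructor
  · rintro ⟨u, hu, huniq⟩
    refine ⟨fun j : Fin (2*n+1) =>
      u ⟨psiSE a b ((((((j : ℕ) : ℤ) - (n : ℤ)) : ℤ) : ℝ) * h), hmemP _⟩, hsamp u hu, ?_⟩
    intro c' hc'
    obtain ⟨u', hu', hu'P⟩ := key c' hc'
    have heq : u' = u := huniq u' hu'
    funext jf
    have h1 := hu'P (toZi n jf) (toZi_mem n jf)
    rw [heq, toFini_toZi n jf] at h1
    rw [← h1]
    rfl
  · rintro ⟨c, hc, hcuniq⟩
    obtain ⟨u, hu, huP⟩ := key c hc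
    refine ⟨u, hu, ?_⟩
    intro u' hu'
    have hcv : (fun j : Fin (2*n+1) =>
        u' ⟨psiSE a b ((((((j : ℕ) : ℤ) - (n : ℤ)) : ℤ) : ℝ) * h), hmemP _⟩) = c :=
      hcuniq _ (hsamp u' hu')
    -- samples of u' and u agree
    have hsampeq : ∀ j ∈ Finset.Icc (-(n:ℤ)) (n:ℤ),
        Set.IccExtend hab.le (⇑u') (psiSE a b ((j:ℝ) * h))
          = Set.IccExtend hab.le (⇑u) (psiSE a b ((j:ℝ) * h)) := by
      intro j hj
      rw [Set.IccExtend_of_mem hab.le _ (hmemP j), Set.IccExtend_of_mem hab.le _ (hmemP j)]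
      have h1 := congrFun hcv (toFini n j)
      have harg : psiSE a b ((((((toFini n j : ℕ) : ℤ) - (n : ℤ)) : ℤ) : ℝ) * h)
          = psiSE a b ((j:ℝ) * h) := by
        rw [show ((toFini n j : ℕ) : ℤ) - (n : ℤ) = j from toZi_toFini n hj]
      have hsub : (⟨psiSE a b ((((((toFini n j : ℕ) : ℤ) - (n : ℤ)) : ℤ) : ℝ) * h),
          hmemP _⟩ : Set.Icc a b) = ⟨psiSE a b ((j:ℝ) * h), hmemP j⟩ := Subtype.ext harg
      rw [hsub] at h1
      rw [h1, huP j hj]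
    have hJeq : ∀ x : Set.Icc a b,
        JmF a b (psiSE a b) (psiSE' a b) (phiSE a b) n h (Set.IccExtend hab.le (⇑u')) (x : ℝ)
          = JmF a b (psiSE a b) (psiSE' a b) (phiSE a b) n h
              (Set.IccExtend hab.le (⇑u)) (x : ℝ) := by
      intro x
      rw [JmF_eq, JmF_eq]
      exact Finset.sum_congr rfl fun i _ => by rw [CoefI_congr hsampeq i]
    ext x
    have e1 := hu' x
    have e2 := hu x
    rw [hJeq x] at e1
    have : z * u' x = z * u x := by
      have := e1.trans e2.symm
      linear_combination this
    exact mul_left_cancel₀ hz this
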